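/- Let n ≥ 2, k ≥ 1, n_k ≥ 1 be integers and n₁,…,n_{k−1} nonnegative integers. Let f be a non-constant polynomial over ℂ all of whose zeros have multiplicity at least k. Then for any nonzero complex number c, the polynomial f^n·(f')^{n₁}·…·(f^{(k)})^{n_k} − c has at least two distinct zeros. -/

import Mathlib

open Polynomial

lemma iter_deriv_aux (f : ℂ[X]) (hf0 : f ≠ 0) :
    ∀ j, j ≤ f.natDegree → derivative^[j] f ≠ 0 ∧ (derivative^[j] f).natDegree = f.natDegree - j := by
  intro j
  induction j with
  | zero => intro _; simpa using hf0
  | succ j ih =>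
    intro hj
    obtain ⟨hne, hdeg⟩ := ih (by omega)
    have hpos : 0 < (derivative^[j] f).natDegree := by omega
    have hd := degree_derivative_eq (derivative^[j] f) hpos
    rw [Function.iterate_succ_apply']
    constructor
    · intro h0
      rw [h0, degree_zero] at hd
      exact WithBot.bot_ne_coe hd
    · have := natDegree_eq_of_degree_eq_some hd
      omega

theorem stmt1 (n k : ℕ) (hn : 2 ≤ n) (hk : 1 ≤ k) (ν : ℕ → ℕ) (hνk : 1 ≤ ν k)
    (f : ℂ[X]) (hf : 1 ≤ f.natDegree)
    (hmult : ∀ z : ℂ, f.IsRoot z → k ≤ f.rootMultiplicity z)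
    (c : ℂ) (hc : c ≠ 0) :
    ∃ z₁ z₂ : ℂ, z₁ ≠ z₂ ∧
      (f ^ n * ∏ j ∈ Finset.Icc 1 k, (derivative^[j] f) ^ (ν j) - C c).IsRoot z₁ ∧
      (f ^ n * ∏ j ∈ Finset.Icc 1 k, (derivative^[j] f) ^ (ν j) - C c).IsRoot z₂ := by
  classical
  have hf0 : f ≠ 0 := fun h => by simp [h] at hf
  -- f has a root
  obtain ⟨w, hw⟩ := Complex.exists_root (f := f)
    (by rw [degree_eq_natDegree hf0]; exact_mod_cast Nat.pos_of_ne_zero (by omega))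
  -- natDegree f ≥ k
  have hdegk : k ≤ f.natDegree := by
    have h1 := hmult w hw
    have h2 : f.rootMultiplicity w = f.roots.count w := (count_roots f).symm
    have h3 := Multiset.count_le_card w f.roots
    have h4 := card_roots' f
    omega
  set G : ℂ[X] := ∏ j ∈ Finset.Icc 1 k, (derivative^[j] f) ^ (ν j) with hGdef
  have hG0 : G ≠ 0 := by
    apply Finset.prod_ne_zero_iff.mpr
    intro j hj
    apply pow_ne_zero
    exact (iter_deriv_aux f hf0 j (le_trans (Finset.mem_Icc.mp hj).2 hdegk)).1
  set M : ℂ[X] := f ^ n * G with hMdef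
  have hM0 : M ≠ 0 := mul_ne_zero (pow_ne_zero _ hf0) hG0
  have hMdeg : 1 ≤ M.natDegree := by
    have h1 : (f ^ n).natDegree ≤ M.natDegree :=
      natDegree_le_of_dvd ⟨G, rfl⟩ hM0
    rw [natDegree_pow] at h1
    nlinarith
  set p : ℂ[X] := M - C c with hpdef
  have hpdeg : p.natDegree = M.natDegree := natDegree_sub_C
  have hp0 : p ≠ 0 := fun h => by simp [h] at hpdeg; omega
  obtain ⟨z₀, hz₀⟩ := Complex.exists_root (f := p)
    (by rw [degree_eq_natDegree hp0]; exact_mod_cast Nat.pos_of_ne_zero (by omega))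
  by_contra hcon
  push_neg at hcon
  have hall : ∀ z : ℂ, p.IsRoot z → z = z₀ := by
    intro z hz
    by_contra hne
    exact (hcon z z₀ hne hz) hz₀
  -- factorization p = C a * (X - C z₀)^m
  have hsplit : p = C p.leadingCoeff * (p.roots.map fun a => X - C a).prod :=
    Splits.eq_prod_roots (IsAlgClosed.splits p)
  have hroots : p.roots = Multiset.replicate (Multiset.card p.roots) z₀ := by
    apply (Multiset.eq_replicate_card).mpr
    intro b hb
    exact hall b ((mem_roots'.mp hb).2
  )
  set m : ℕ := Multiset.card p.roots with hm
  have hm1 : 1 ≤ m := by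
    have : z₀ ∈ p.roots := mem_roots'.mpr ⟨hp0, hz₀⟩
    have := Multiset.card_pos_iff_exists_mem.mpr ⟨z₀, this⟩
    omega
  have hfact : p = C p.leadingCoeff * (X - C z₀) ^ m := by
    rw [hsplit, hroots]
    simp [Multiset.map_replicate, Multiset.prod_replicate]
  have ha : p.leadingCoeff ≠ 0 := leadingCoeff_ne_zero.mpr hp0
  -- derivative of p vanishes at w
  have hdw : (derivative p).eval w = 0 := by
    have : derivative p = derivative M := by simp [hpdef]
    rw [this, hMdef, derivative_mul, derivative_pow]
    have hn1 : n - 1 ≠ 0 := by omega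
    have hn0 : n ≠ 0 := by omega
    have hw' : eval w f = 0 := hw
    simp [eval_mul, eval_add, hw', zero_pow hn1, zero_pow hn0]
  -- derivative from factorization
  have hdw2 : (derivative p).eval w
      = p.leadingCoeff * ((m : ℂ) * (w - z₀) ^ (m - 1)) := by
    rw [hfact, derivative_mul, derivative_pow]
    simp [mul_comm]
  rw [hdw2] at hdw
  have hmC : (m : ℂ) ≠ 0 := Nat.cast_ne_zero.mpr (by omega)
  have hwz : (w - z₀) ^ (m - 1) = 0 := by
    rcases mul_eq_zero.mp hdw with h | h
    · exact absurd h ha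
    rcases mul_eq_zero.mp h with h | h
    · exact absurd h hmC
    · exact h
  have hwz0 : w = z₀ := by
    have h := (pow_eq_zero_iff' (M₀ := ℂ) (a := w - z₀) (n := m - 1)).mp hwz
    linear_combination h.1
  -- contradiction: M.eval z₀ = 0 but p.eval z₀ = 0 means M.eval z₀ = c
  have hw' : eval z₀ f = 0 := hwz0 ▸ (hw : eval w f = 0)
  have hMz : M.eval z₀ = 0 := by
    simp [hMdef, eval_mul, eval_pow, hw', zero_pow (show n ≠ 0 by omega)]
  have hMc : M.eval z₀ = c := by
    have h : eval z₀ p = 0 := hz₀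
    simp only [hpdef, eval_sub, eval_C, sub_eq_zero] at h
    exact h
  rw [hMz] at hMc
  exact hc hMc.symm
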